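/- For the Lamplighter group action on X and the left Følner sequence (F_n^r) associated to a sequence r = (r_ℓ) in [0,1], the empirical measures μ_n^x = (1/|F_n^r|) Σ_{g∈F_n^r} δ_{gx} converge weak* to (1−r_b)·δ_{(∞,1)} + r_b·δ_{(∞,0)} when x = (b,1), b ∈ ℤ, and to r_b·δ_{(∞,1)} + (1−r_b)·δ_{(∞,0)} when x = (b,0). -/

import Mathlib

open Filter Topology

noncomputable section

/-- The shift `s ↦ s - 1` on the one-point compactification `ℤ ∪ {∞}`, fixing `∞`. -/
def shiftOP : Equiv.Perm (OnePoint ℤ) :=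
  (Equiv.optionCongr (Equiv.subRight (1 : ℤ)) : Equiv.Perm (Option ℤ))

/-- The phase space `X = (ℤ ∪ {∞}) × {0,1}`. -/
abbrev LampX : Type := OnePoint ℤ × Bool

/-- The transposition `f` swapping `(0,1)` and `(0,0)`. -/
def lampF : Equiv.Perm LampX :=
  haveI : DecidableEq LampX := Classical.decEq _
  Equiv.swap (((0 : ℤ) : OnePoint ℤ), true) (((0 : ℤ) : OnePoint ℤ), false)

/-- The shift `σ` on `X`, decrementing the integer coordinate. -/
def lampSigma : Equiv.Perm LampX := (shiftOP).prodCongr (Equiv.refl Bool)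

/-- `f_n = σ^{-n} ∘ f ∘ σ^n`. -/
def lampfn (n : ℤ) : Equiv.Perm LampX := lampSigma ^ (-n) * lampF * lampSigma ^ n

/-- The Lamplighter group `G = ⟨f, σ⟩`. -/
def lampG : Subgroup (Equiv.Perm LampX) := Subgroup.closure {lampF, lampSigma}

/-- For `l = [b_1, …, b_k]`, the composition `f_{b_k} ∘ ⋯ ∘ f_{b_1}`. -/
def lampProd (l : List ℤ) : Equiv.Perm LampX := (l.reverse.map lampfn).prod

open scoped symmDiff

/-- `f_𝐛` for a finite set `𝐛 ⊆ ℤ`: the composition `f_{b_m} ∘ ⋯ ∘ f_{b_1}` where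
`b_1 < ⋯ < b_m` enumerates `𝐛` increasingly. -/
def lampfB (b : Finset ℤ) : Equiv.Perm LampX := lampProd (b.sort (· ≤ ·))

open OnePoint in
lemma shiftOP_coe (c : ℤ) : shiftOP (c : OnePoint ℤ) = ((c - 1 : ℤ) : OnePoint ℤ) := rfl

open OnePoint in
lemma shiftOP_infty : shiftOP (∞ : OnePoint ℤ) = ∞ := rfl

open OnePoint in
lemma shiftOP_zpow_infty (k : ℤ) : (shiftOP ^ k) (∞ : OnePoint ℤ) = ∞ :=
  Equiv.Perm.zpow_apply_eq_self_of_apply_eq_self shiftOP_infty k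

lemma shiftOP_zpow_coe (k c : ℤ) : (shiftOP ^ k) (c : OnePoint ℤ) = ((c - k : ℤ) : OnePoint ℤ) := by
  induction k using Int.induction_on with
  | zero => simp
  | succ k ih =>
      have : shiftOP ^ ((k : ℤ) + 1) = shiftOP * shiftOP ^ (k : ℤ) := by
        rw [← zpow_one_add]; ring_nf
      rw [this, Equiv.Perm.mul_apply, ih, shiftOP_coe]
      ring_nf
  | pred k ih =>
      have : shiftOP ^ (-(k : ℤ) - 1) = shiftOP⁻¹ * shiftOP ^ (-(k : ℤ)) := by
        rw [← zpow_neg_one, ← zpow_add]; ring_nf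
      rw [this, Equiv.Perm.mul_apply, ih]
      have : shiftOP⁻¹ ((c - -(k:ℤ) : ℤ) : OnePoint ℤ) = ((c - -(k:ℤ) + 1 : ℤ) : OnePoint ℤ) := by
        rw [Equiv.Perm.inv_eq_iff_eq, shiftOP_coe]; ring_nf
      rw [this]; ring_nf

lemma lampSigma_zpow (k : ℤ) (x : LampX) :
    (lampSigma ^ k) x = ((shiftOP ^ k) x.1, x.2) := by
  have : lampSigma ^ k = (shiftOP ^ k).prodCongr (Equiv.refl Bool) := by
    induction k using Int.induction_on with
    | zero => rfl
    | succ k ih => rw [zpow_add_one, zpow_add_one, ih]; rfl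
    | pred k ih => rw [zpow_sub_one, zpow_sub_one, ih]; rfl
  rw [this]; rfl

lemma lampF_zero (i : Bool) : lampF (((0:ℤ) : OnePoint ℤ), i) = (((0:ℤ) : OnePoint ℤ), !i) := by
  cases i <;> simp [lampF]

lemma lampF_coe_ne {c : ℤ} (hc : c ≠ 0) (i : Bool) :
    lampF ((c : OnePoint ℤ), i) = ((c : OnePoint ℤ), i) := by
  have h1 : ((c : OnePoint ℤ), i) ≠ (((0:ℤ) : OnePoint ℤ), true) := by
    intro h; exact hc (by simpa [OnePoint.coe_eq_coe] using congrArg Prod.fst h)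
  have h2 : ((c : OnePoint ℤ), i) ≠ (((0:ℤ) : OnePoint ℤ), false) := by
    intro h; exact hc (by simpa [OnePoint.coe_eq_coe] using congrArg Prod.fst h)
  exact @Equiv.swap_apply_of_ne_of_ne LampX (Classical.decEq _) _ _ _ h1 h2

open OnePoint in
lemma lampF_infty (i : Bool) : lampF (∞, i) = (∞, i) := by
  have h1 : ((∞ : OnePoint ℤ), i) ≠ (((0:ℤ) : OnePoint ℤ), true) := by
    intro h; exact OnePoint.coe_ne_infty _ (congrArg Prod.fst h).symm
  have h2 : ((∞ : OnePoint ℤ), i) ≠ (((0:ℤ) : OnePoint ℤ), false) := by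
    intro h; exact OnePoint.coe_ne_infty _ (congrArg Prod.fst h).symm
  exact @Equiv.swap_apply_of_ne_of_ne LampX (Classical.decEq _) _ _ _ h1 h2

lemma lampfn_coe (ℓ c : ℤ) (i : Bool) :
    lampfn ℓ ((c : OnePoint ℤ), i) = ((c : OnePoint ℤ), if c = ℓ then !i else i) := by
  simp only [lampfn, Equiv.Perm.mul_apply, lampSigma_zpow]
  simp only [shiftOP_zpow_coe]
  by_cases hc : c = ℓ
  · subst hc
    rw [show ((c - c : ℤ) : OnePoint ℤ) = ((0:ℤ) : OnePoint ℤ) by norm_num, lampF_zero]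
    simp only [shiftOP_zpow_coe]
    norm_num
  · rw [lampF_coe_ne (by omega)]
    simp only [shiftOP_zpow_coe]
    simp [hc]

open OnePoint in
lemma lampfn_infty (ℓ : ℤ) (i : Bool) : lampfn ℓ (∞, i) = (∞, i) := by
  simp only [lampfn, Equiv.Perm.mul_apply, lampSigma_zpow]
  simp only [shiftOP_zpow_infty, lampF_infty, shiftOP_zpow_infty]

lemma lampProd_nil : lampProd [] = 1 := rfl

lemma lampProd_cons (ℓ : ℤ) (t : List ℤ) (x : LampX) :
    lampProd (ℓ :: t) x = lampProd t (lampfn ℓ x) := by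
  unfold lampProd
  rw [List.reverse_cons, List.map_append, List.prod_append]
  simp [Equiv.Perm.mul_apply]

lemma lampProd_coe {l : List ℤ} (hl : l.Nodup) (c : ℤ) (i : Bool) :
    lampProd l ((c : OnePoint ℤ), i) = ((c : OnePoint ℤ), if c ∈ l then !i else i) := by
  induction l generalizing i with
  | nil => simp [lampProd_nil]
  | cons ℓ t ih =>
      rw [lampProd_cons, lampfn_coe]
      rcases List.nodup_cons.mp hl with ⟨hℓ, ht⟩
      by_cases hc : c = ℓ
      · subst hc
        rw [if_pos rfl, ih ht, if_neg hℓ]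
        simp
      · rw [if_neg hc, ih ht]
        simp [List.mem_cons, hc]

open OnePoint in
lemma lampProd_infty (l : List ℤ) (i : Bool) : lampProd l (∞, i) = (∞, i) := by
  induction l generalizing i with
  | nil => simp [lampProd_nil]
  | cons ℓ t ih => rw [lampProd_cons, lampfn_infty, ih]

lemma lampfB_coe (b : Finset ℤ) (c : ℤ) (i : Bool) :
    lampfB b ((c : OnePoint ℤ), i) = ((c : OnePoint ℤ), if c ∈ b then !i else i) := by
  unfold lampfB
  rw [lampProd_coe (b.sort_nodup (· ≤ ·)) c i]
  simp [Finset.mem_sort]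

lemma lampG_elt_apply (a : ℤ) (bb : Finset ℤ) (c : ℤ) (i : Bool) :
    (lampSigma ^ a * lampfB bb) ((c : OnePoint ℤ), i)
      = (((c - a : ℤ) : OnePoint ℤ), if c ∈ bb then !i else i) := by
  rw [Equiv.Perm.mul_apply, lampfB_coe, lampSigma_zpow]
  simp only [shiftOP_zpow_coe]

lemma lamp_inj : Function.Injective (fun p : ℤ × Finset ℤ => lampSigma ^ p.1 * lampfB p.2) := by
  rintro ⟨a1, b1⟩ ⟨a2, b2⟩ hEq
  simp only at hEq
  obtain ⟨c, hc⟩ := Infinite.exists_notMem_finset (b1 ∪ b2)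
  have hc1 : c ∉ b1 := fun h => hc (Finset.mem_union_left _ h)
  have hc2 : c ∉ b2 := fun h => hc (Finset.mem_union_right _ h)
  have h1 := congrArg (fun g : Equiv.Perm LampX => g ((c : OnePoint ℤ), true)) hEq
  simp only [lampG_elt_apply, if_neg hc1, if_neg hc2] at h1
  have ha : a1 = a2 := by
    have := congrArg Prod.fst h1
    simp only [OnePoint.coe_eq_coe] at this
    omega
  subst ha
  have hb : b1 = b2 := by
    ext ℓ
    have h2 := congrArg (fun g : Equiv.Perm LampX => g ((ℓ : OnePoint ℤ), true)) hEq
    simp only [lampG_elt_apply] at h2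
    have := congrArg Prod.snd h2
    by_cases hl1 : ℓ ∈ b1 <;> by_cases hl2 : ℓ ∈ b2 <;>
      simp [hl1, hl2] at this ⊢
  rw [hb]

lemma card_Icc_pow (n : ℕ) :
    ((Finset.Icc (-(2 ^ n : ℤ)) (2 ^ n)).card : ℝ) = 2 * 2 ^ n + 1 := by
  rw [Int.card_Icc]
  have h1 : ((2:ℤ) ^ n + 1 - -2 ^ n) = 2 * 2 ^ n + 1 := by ring
  rw [h1]
  have h : (0:ℤ) ≤ 2 * 2 ^ n + 1 := by positivity
  have h2 : (((2 * 2 ^ n + 1 : ℤ)).toNat : ℤ) = 2 * 2 ^ n + 1 := Int.toNat_of_nonneg h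
  exact_mod_cast congrArg (Int.cast : ℤ → ℝ) h2

lemma avg_window_tendsto {φ : ℤ → ℝ} {L : ℝ} (hφ : Tendsto φ cofinite (𝓝 L))
    {M : ℝ} (hM : ∀ c, |φ c - L| ≤ M) (b : ℤ) :
    Tendsto (fun n : ℕ =>
        (∑ a ∈ Finset.Icc (-(2 ^ n : ℤ)) (2 ^ n), φ (b - a)) /
          ((Finset.Icc (-(2 ^ n : ℤ)) (2 ^ n)).card : ℝ))
      atTop (𝓝 L) := by
  have hM0 : 0 ≤ M := le_trans (abs_nonneg _) (hM 0)
  rw [Metric.tendsto_atTop]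
  intro ε hε
  have h0 := hφ (Metric.ball_mem_nhds L (by positivity : (0:ℝ) < ε/2))
  rw [Filter.mem_map, Filter.mem_cofinite] at h0
  have hball : {c : ℤ | ¬ |φ c - L| < ε / 2}.Finite := by
    convert h0 using 1
    ext c; simp [Metric.mem_ball, Real.dist_eq]
  set T := hball.toFinset with hT
  obtain ⟨N, hN⟩ := exists_nat_gt (2 * (T.card * M) / ε)
  refine ⟨N, fun n hn => ?_⟩
  set I := Finset.Icc (-(2 ^ n : ℤ)) (2 ^ n) with hI
  have hcard : (I.card : ℝ) = 2 * 2 ^ n + 1 := card_Icc_pow n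
  have hcpos : (0:ℝ) < I.card := by rw [hcard]; positivity
  have hbig : 2 * ((T.card : ℝ) * M) / ε < I.card := by
    calc 2 * ((T.card : ℝ) * M) / ε < N := hN
    _ ≤ n := by exact_mod_cast hn
    _ ≤ 2 ^ n := by exact_mod_cast (Nat.lt_two_pow_self (n := n)).le
    _ ≤ 2 * 2 ^ n + 1 := by nlinarith [pow_pos (by norm_num : (0:ℝ) < 2) n]
    _ = I.card := hcard.symm
  have key : ∀ a ∈ I, |φ (b - a) - L| ≤ if b - a ∈ T then M else ε / 2 := by
    intro a _
    by_cases hba : b - a ∈ T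
    · rw [if_pos hba]; exact hM _
    · rw [if_neg hba]
      have : b - a ∉ {c : ℤ | ¬ |φ c - L| < ε / 2} := by
        rwa [← Set.Finite.mem_toFinset hball]
      simpa using not_not.mp this |>.le
  have hsum : |∑ a ∈ I, φ (b - a) - I.card * L| ≤ T.card * M + I.card * (ε / 2) := by
    have h1 : ∑ a ∈ I, φ (b - a) - I.card * L = ∑ a ∈ I, (φ (b - a) - L) := by
      rw [Finset.sum_sub_distrib, Finset.sum_const, nsmul_eq_mul]
    rw [h1]
    calc |∑ a ∈ I, (φ (b - a) - L)| ≤ ∑ a ∈ I, |φ (b - a) - L| := Finset.abs_sum_le_sum_abs _ _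
    _ ≤ ∑ a ∈ I, (if b - a ∈ T then M else ε / 2) := Finset.sum_le_sum key
    _ = ∑ a ∈ I.filter (fun a => b - a ∈ T), M
          + ∑ a ∈ I.filter (fun a => ¬ b - a ∈ T), (ε / 2) := by
        rw [← Finset.sum_filter_add_sum_filter_not I (fun a => b - a ∈ T)]
        congr 1
        · exact Finset.sum_congr rfl (fun a ha => if_pos (Finset.mem_filter.mp ha).2)
        · exact Finset.sum_congr rfl (fun a ha => if_neg (Finset.mem_filter.mp ha).2)
    _ ≤ T.card * M + I.card * (ε / 2) := by
        rw [Finset.sum_const, Finset.sum_const, nsmul_eq_mul, nsmul_eq_mul]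
        have hc1 : (I.filter (fun a => b - a ∈ T)).card ≤ T.card :=
          Finset.card_le_card_of_injOn (fun a => b - a)
            (fun a ha => (Finset.mem_filter.mp ha).2)
            (fun x _ y _ hxy => by simp only at hxy; omega)
        have hc2 : (I.filter (fun a => ¬ b - a ∈ T)).card ≤ I.card :=
          Finset.card_filter_le _ _
        gcongr <;> first
          | exact_mod_cast hc1
          | exact_mod_cast hc2
  rw [Real.dist_eq]
  have heq : (∑ a ∈ I, φ (b - a)) / I.card - L = (∑ a ∈ I, φ (b - a) - I.card * L) / I.card := by
    field_simp
  rw [heq, abs_div, abs_of_pos hcpos, div_lt_iff₀ hcpos]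
  have h2 : (T.card:ℝ) * M < ε / 2 * I.card := by
    rw [div_lt_iff₀ hε] at hbig
    nlinarith
  calc |∑ a ∈ I, φ (b - a) - I.card * L| ≤ T.card * M + I.card * (ε / 2) := hsum
  _ < ε / 2 * I.card + I.card * (ε / 2) := by linarith
  _ = ε * I.card := by ring

open OnePoint in
lemma tendsto_h_infty (h : C(LampX, ℝ)) (i : Bool) :
    Tendsto (fun c : ℤ => h ((c : OnePoint ℤ), i)) cofinite (𝓝 (h (∞, i))) := by
  have h1 : Tendsto (fun c : ℤ => (c : OnePoint ℤ)) cofinite (𝓝 (∞ : OnePoint ℤ)) := by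
    have := OnePoint.tendsto_coe_infty (X := ℤ)
    rwa [coclosedCompact_eq_cocompact, cocompact_eq_cofinite] at this
  have h2 : Tendsto (fun c : ℤ => ((c : OnePoint ℤ), i)) cofinite (𝓝 ((∞ : OnePoint ℤ), i)) :=
    h1.prodMk_nhds tendsto_const_nhds
  exact (h.continuous.continuousAt.tendsto).comp h2

lemma bound_h (h : C(LampX, ℝ)) : ∃ M : ℝ, ∀ x : LampX, |h x| ≤ M := by
  obtain ⟨x0, -, hx0⟩ := isCompact_univ.exists_isMaxOn (Set.univ_nonempty)
    (continuous_abs.comp h.continuous).continuousOn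
  exact ⟨|h x0|, fun x => hx0 (Set.mem_univ x)⟩

/-- For the left Følner sequence `F_n^r = {σ^a ∘ f_𝐛 : a ∈ [-2^n,2^n], 𝐛 ∈ B_n}`
associated to a sequence `r = (r_ℓ)` in `[0,1]` (where `B_n` satisfies
`| |{𝐛 ∈ B_n : ℓ₀ ∈ 𝐛}|/|B_n| − r_{ℓ₀} | ≤ 2^{−2n}` for `ℓ₀ ∈ [−n,n]`), the empirical
measures `μ_n^x = (1/|F_n^r|) Σ_{g∈F_n^r} δ_{gx}` converge weak* to
`(1−r_b)·δ_{(∞,1)} + r_b·δ_{(∞,0)}` if `x = (b,1)` and to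
`r_b·δ_{(∞,1)} + (1−r_b)·δ_{(∞,0)}` if `x = (b,0)`, for every `b ∈ ℤ`. -/
theorem lamplighter_Fnr_averages :
    ∀ r : ℤ → ℝ, (∀ ℓ, r ℓ ∈ Set.Icc (0:ℝ) 1) →
    haveI : DecidableEq (Equiv.Perm LampX) := Classical.decEq _
    ∀ B : ℕ → Finset (Finset ℤ),
    (∀ n, (B n).Nonempty) →
    (∀ n, ∀ b ∈ B n, b ⊆ Finset.Icc (-(2 ^ n : ℤ)) (2 ^ n)) →
    (∀ n : ℕ, ∀ ℓ₀ : ℤ, -(n : ℤ) ≤ ℓ₀ → ℓ₀ ≤ (n : ℤ) →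
      |(((B n).filter (fun b => ℓ₀ ∈ b)).card : ℝ) / ((B n).card : ℝ) - r ℓ₀|
        ≤ ((2 : ℝ) ^ (2 * n))⁻¹) →
    ∀ F : ℕ → Finset (Equiv.Perm LampX),
    (∀ n, F n = (Finset.Icc (-(2 ^ n : ℤ)) (2 ^ n) ×ˢ B n).image
        (fun p => lampSigma ^ p.1 * lampfB p.2)) →
    ∀ b : ℤ, ∀ h : C(LampX, ℝ),
      (Tendsto (fun n => (∑ g ∈ F n, h (g (((b : ℤ) : OnePoint ℤ), true))) / (F n).card)
        atTop (𝓝 ((1 - r b) * h (OnePoint.infty, true) + r b * h (OnePoint.infty, false))))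
      ∧
      (Tendsto (fun n => (∑ g ∈ F n, h (g (((b : ℤ) : OnePoint ℤ), false))) / (F n).card)
        atTop (𝓝 (r b * h (OnePoint.infty, true) + (1 - r b) * h (OnePoint.infty, false)))) := by
  intro r hr B hBne hBsub hBapprox F hF b h
  obtain ⟨M0, hM0⟩ := bound_h h
  -- the probability p n
  set k : ℕ → ℕ := fun n => ((B n).filter (fun s => b ∈ s)).card with hk
  set p : ℕ → ℝ := fun n => (k n : ℝ) / ((B n).card : ℝ) with hp
  -- p n → r b
  have hptend : Tendsto p atTop (𝓝 (r b)) := by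
    rw [← tendsto_sub_nhds_zero_iff]
    apply squeeze_zero_norm' (a := fun n : ℕ => ((2:ℝ) ^ (2 * n))⁻¹)
    · rw [Filter.eventually_atTop]
      refine ⟨b.natAbs, fun n hn => ?_⟩
      have hb : |b| ≤ (n : ℤ) := by
        rw [Int.abs_eq_natAbs]; exact_mod_cast hn
      obtain ⟨hb1, hb2⟩ := abs_le.mp hb
      simpa [Real.norm_eq_abs, hp, hk] using hBapprox n b hb1 hb2
    · have h4 : Tendsto (fun n : ℕ => ((4:ℝ) ^ n)⁻¹) atTop (𝓝 0) :=
        tendsto_inv_atTop_zero.comp (tendsto_pow_atTop_atTop_of_one_lt (by norm_num : (1:ℝ) < 4))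
      refine h4.congr (fun n => ?_)
      rw [pow_mul]
      norm_num
  -- the windows averages
  set I : ℕ → Finset ℤ := fun n => Finset.Icc (-(2 ^ n : ℤ)) (2 ^ n) with hI
  set A : Bool → ℕ → ℝ :=
    fun i n => (∑ a ∈ I n, h (((b - a : ℤ) : OnePoint ℤ), i)) / ((I n).card : ℝ) with hA
  have hAtend : ∀ i : Bool, Tendsto (A i) atTop (𝓝 (h (OnePoint.infty, i))) := by
    intro i
    have hMc : ∀ c : ℤ, |h ((c : OnePoint ℤ), i) - h (OnePoint.infty, i)| ≤ M0 + M0 := by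
      intro c
      calc |h ((c : OnePoint ℤ), i) - h (OnePoint.infty, i)|
          ≤ |h ((c : OnePoint ℤ), i)| + |h (OnePoint.infty, i)| := abs_sub _ _
      _ ≤ M0 + M0 := add_le_add (hM0 _) (hM0 _)
    exact avg_window_tendsto (tendsto_h_infty h i) hMc b
  -- key identity
  have hkey : ∀ t : Bool, ∀ n : ℕ,
      (∑ g ∈ F n, h (g (((b : ℤ) : OnePoint ℤ), t))) / ((F n).card : ℝ)
        = p n * A (!t) n + (1 - p n) * A t n := by
    intro t n
    haveI : DecidableEq (Equiv.Perm LampX) := Classical.decEq _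
    have hBpos : (0:ℝ) < ((B n).card : ℝ) := by
      exact_mod_cast Finset.card_pos.mpr (hBne n)
    have hIpos : (0:ℝ) < ((I n).card : ℝ) := by
      rw [hI]; rw [card_Icc_pow n]; positivity
    have hkle : k n ≤ (B n).card := Finset.card_filter_le _ _
    have himg := @Finset.card_image_of_injective (ℤ × Finset ℤ) (Equiv.Perm LampX)
      (fun p => lampSigma ^ p.1 * lampfB p.2) (Classical.decEq _)
      (Finset.Icc (-(2 ^ n : ℤ)) (2 ^ n) ×ˢ B n) lamp_inj
    have hcard : ((F n).card : ℝ) = ((I n).card : ℝ) * ((B n).card : ℝ) := by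
      rw [hF n, himg, Finset.card_product]
      push_cast
      rfl
    have hsum : (∑ g ∈ F n, h (g (((b : ℤ) : OnePoint ℤ), t)))
        = (k n : ℝ) * (∑ a ∈ I n, h (((b - a : ℤ) : OnePoint ℤ), !t))
          + (((B n).card : ℝ) - (k n : ℝ)) * (∑ a ∈ I n, h (((b - a : ℤ) : OnePoint ℤ), t)) := by
      have hsi := @Finset.sum_image (Equiv.Perm LampX) (ℤ × Finset ℤ) ℝ _
        (fun g : Equiv.Perm LampX => h (g (((b : ℤ) : OnePoint ℤ), t))) (Classical.decEq _)
        (Finset.Icc (-(2 ^ n : ℤ)) (2 ^ n) ×ˢ B n)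
        (fun p => lampSigma ^ p.1 * lampfB p.2)
        (fun x _ y _ hxy => lamp_inj hxy)
      rw [hF n, hsi, Finset.sum_product]
      have hinner : ∀ a ∈ I n, (∑ bb ∈ B n, h ((lampSigma ^ a * lampfB bb) ((b : OnePoint ℤ), t)))
          = (k n : ℝ) * h (((b - a : ℤ) : OnePoint ℤ), !t)
            + (((B n).card : ℝ) - (k n : ℝ)) * h (((b - a : ℤ) : OnePoint ℤ), t) := by
        intro a _
        have : ∀ bb ∈ B n, h ((lampSigma ^ a * lampfB bb) ((b : OnePoint ℤ), t))
            = if b ∈ bb then h (((b - a : ℤ) : OnePoint ℤ), !t)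
              else h (((b - a : ℤ) : OnePoint ℤ), t) := by
          intro bb _
          rw [lampG_elt_apply]
          by_cases hbb : b ∈ bb <;> simp [hbb]
        rw [Finset.sum_congr rfl this, Finset.sum_ite, Finset.sum_const, Finset.sum_const,
          nsmul_eq_mul, nsmul_eq_mul, Finset.filter_not, Finset.card_sdiff_of_subset (Finset.filter_subset _ _)]
        have : (((B n).card - ((B n).filter (fun s => b ∈ s)).card : ℕ) : ℝ)
            = ((B n).card : ℝ) - (k n : ℝ) := by
          rw [Nat.cast_sub hkle]
        rw [this]
      rw [Finset.sum_congr rfl hinner, Finset.sum_add_distrib, ← Finset.mul_sum, ← Finset.mul_sum]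
    rw [hsum, hcard, hp, hA]
    have h1p : 1 - (k n : ℝ) / ((B n).card : ℝ)
        = (((B n).card : ℝ) - (k n : ℝ)) / ((B n).card : ℝ) := by
      field_simp
    rw [h1p]
    have gen : ∀ (K BB ii C A0 : ℝ), BB ≠ 0 → ii ≠ 0 →
        (K * C + (BB - K) * A0) / (ii * BB)
          = K / BB * (C / ii) + (BB - K) / BB * (A0 / ii) := by
      intros K BB ii C A0 hBB hii
      rw [div_mul_div_comm, div_mul_div_comm,
        div_add_div _ _ (mul_ne_zero hBB hii) (mul_ne_zero hBB hii),
        div_eq_div_iff (mul_ne_zero hii hBB)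
          (mul_ne_zero (mul_ne_zero hBB hii) (mul_ne_zero hBB hii))]
      ring
    exact gen _ _ _ _ _ (ne_of_gt hBpos) (ne_of_gt hIpos)
  -- final limits
  have main : ∀ t : Bool,
      Tendsto (fun n => (∑ g ∈ F n, h (g (((b : ℤ) : OnePoint ℤ), t))) / ((F n).card : ℝ))
        atTop (𝓝 (r b * h (OnePoint.infty, !t) + (1 - r b) * h (OnePoint.infty, t))) := by
    intro t
    have : Tendsto (fun n => p n * A (!t) n + (1 - p n) * A t n) atTop
        (𝓝 (r b * h (OnePoint.infty, !t) + (1 - r b) * h (OnePoint.infty, t))) :=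
      (hptend.mul (hAtend (!t))).add ((tendsto_const_nhds.sub hptend).mul (hAtend t))
    exact this.congr (fun n => (hkey t n).symm)
  constructor
  · have := main true
    rwa [show r b * h (OnePoint.infty, !true) + (1 - r b) * h (OnePoint.infty, true)
      = (1 - r b) * h (OnePoint.infty, true) + r b * h (OnePoint.infty, false) from by
        simp only [Bool.not_true]; ring] at this
  · have := main false
    rwa [show r b * h (OnePoint.infty, !false) + (1 - r b) * h (OnePoint.infty, false)
      = r b * h (OnePoint.infty, true) + (1 - r b) * h (OnePoint.infty, false) from by
        simp only [Bool.not_false]] at this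

end
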